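/- For 0 < c < 1 and 0 < τ ≤ c(1−c)/(3(1+c)²), define f(α) = α − ((1−c)/τ)·log((1 − c·exp(−ατ/c))/(1−c)). If α ≥ 0 and f(α) ≤ 1, then α ≤ √(3(1−c)c/τ). -/

import Mathlib

open Real

lemma pab_exp_le {x : ℝ} (hx : 0 ≤ x) : Real.exp (-x) ≤ 1 - x + x ^ 2 / 2 := by
  have hd : ∀ y : ℝ, HasDerivAt (fun t : ℝ => 1 - t + t ^ 2 / 2 - Real.exp (-t))
      (-1 + y + Real.exp (-y)) y := by
    intro y
    have h1 : HasDerivAt (fun t : ℝ => -t) (-1) y := (hasDerivAt_id y).neg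
    have h2 := h1.exp
    have h3 := (((hasDerivAt_const y (1:ℝ)).sub (hasDerivAt_id y)).add
      ((hasDerivAt_pow 2 y).div_const 2)).sub h2
    refine h3.congr_deriv ?_
    simp
  have hmono : Monotone (fun t : ℝ => 1 - t + t ^ 2 / 2 - Real.exp (-t)) := by
    apply monotone_of_deriv_nonneg (fun y => (hd y).differentiableAt)
    intro y
    rw [(hd y).deriv]
    nlinarith [Real.add_one_le_exp (-y)]
  have := hmono hx
  simpa using this

lemma pab_exp_ge {x : ℝ} (hx : 0 ≤ x) : 1 - x + x ^ 2 / 2 - x ^ 3 / 6 ≤ Real.exp (-x) := by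
  have hd : ∀ y : ℝ, HasDerivAt (fun t : ℝ => Real.exp (-t) - (1 - t + t ^ 2 / 2 - t ^ 3 / 6))
      (-Real.exp (-y) - (-1 + y - y ^ 2 / 2)) y := by
    intro y
    have h1 : HasDerivAt (fun t : ℝ => -t) (-1) y := (hasDerivAt_id y).neg
    have h2 := h1.exp
    have h3 : HasDerivAt (fun t : ℝ => 1 - t + t ^ 2 / 2 - t ^ 3 / 6)
        (-1 + y - y ^ 2 / 2) y := by
      have := (((hasDerivAt_const y (1:ℝ)).sub (hasDerivAt_id y)).add
        ((hasDerivAt_pow 2 y).div_const 2)).sub ((hasDerivAt_pow 3 y).div_const 6)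
      refine this.congr_deriv ?_
      simp
      ring
    have := h2.sub h3
    refine this.congr_deriv ?_
    ring
  have hmono : MonotoneOn (fun t : ℝ => Real.exp (-t) - (1 - t + t ^ 2 / 2 - t ^ 3 / 6))
      (Set.Ici 0) := by
    apply monotoneOn_of_deriv_nonneg (convex_Ici 0)
    · exact fun y _ => ((hd y).differentiableAt).continuousAt.continuousWithinAt
    · intro y _
      exact ((hd y).differentiableAt).differentiableWithinAt
    · intro y hy
      rw [interior_Ici] at hy
      rw [(hd y).deriv]
      have := pab_exp_le (le_of_lt hy)
      linarith
  have := hmono (Set.self_mem_Ici) (Set.mem_Ici.2 hx) hx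
  simp only [Real.exp_zero] at this
  norm_num at this
  linarith

lemma pab_log_le {y : ℝ} (hy : 0 ≤ y) : Real.log (1 + y) ≤ y - y ^ 2 / 2 + y ^ 3 / 3 := by
  have hd : ∀ t : ℝ, 0 < t + 1 → HasDerivAt (fun s : ℝ => s - s ^ 2 / 2 + s ^ 3 / 3 - Real.log (1 + s))
      (1 - t + t ^ 2 - 1 / (1 + t)) t := by
    intro t ht
    have h1 : HasDerivAt (fun s : ℝ => 1 + s) 1 t := (hasDerivAt_id t).const_add 1
    have h2 := h1.log (by linarith)
    have h3 := (((hasDerivAt_id t).sub ((hasDerivAt_pow 2 t).div_const 2)).add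
      ((hasDerivAt_pow 3 t).div_const 3)).sub h2
    refine h3.congr_deriv ?_
    simp
  have hmono : MonotoneOn (fun s : ℝ => s - s ^ 2 / 2 + s ^ 3 / 3 - Real.log (1 + s))
      (Set.Ici 0) := by
    apply monotoneOn_of_deriv_nonneg (convex_Ici 0)
    · exact fun t ht => ((hd t (by simp at ht; linarith)).differentiableAt).continuousAt.continuousWithinAt
    · intro t ht
      rw [interior_Ici] at ht
      exact ((hd t (by simp at ht; linarith)).differentiableAt).differentiableWithinAt
    · intro t ht
      rw [interior_Ici] at ht
      rw [(hd t (by simp at ht; linarith)).deriv]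
      have ht0 : (0:ℝ) < 1 + t := by simp at ht; linarith
      rw [sub_nonneg, div_le_iff₀ ht0]
      nlinarith [(Set.mem_Ioi.mp ht).le]
  have := hmono (Set.self_mem_Ici) (Set.mem_Ici.2 hy) hy
  simp only at this
  norm_num at this
  linarith
lemma pab_lower (c τ x β : ℝ) (hc0 : 0 < c) (hc1 : c < 1) (hτ0 : 0 < τ)
    (hx0 : 0 ≤ x) (hx1 : x * (1 + c) ≤ 1 - c) (hβ : β = c * x / τ) :
    τ * β ^ 2 / (3 * (1 - c) * c) ≤
      β - ((1 - c) / τ) * Real.log ((1 - c * Real.exp (-(x))) / (1 - c)) := by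
  have hd : (0:ℝ) < 1 - c := by linarith
  have hxle1 : x ≤ 1 := by nlinarith
  set E := Real.exp (-x) with hE
  have hEpos : 0 < E := Real.exp_pos _
  have hE1 : E ≤ 1 := by
    rw [hE]
    calc Real.exp (-x) ≤ Real.exp 0 := Real.exp_le_exp.mpr (by linarith)
    _ = 1 := Real.exp_zero
  set u := 1 - E with hu
  have hu0 : 0 ≤ u := by simp [hu]; linarith
  have huxle : u ≤ x := by
    have := Real.add_one_le_exp (-x)
    simp [hu]; linarith
  have huge : x - x ^ 2 / 2 ≤ u := by
    have := pab_exp_le hx0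
    simp [hu]; linarith
  have hxu : x ^ 2 / 2 - x ^ 3 / 6 ≤ x - u := by
    have := pab_exp_ge hx0
    simp [hu]; linarith
  have hu2 : x ^ 2 - x ^ 3 ≤ u ^ 2 := by
    have hfac : 0 ≤ (u - (x - x ^ 2 / 2)) * (u + (x - x ^ 2 / 2)) := by
      apply mul_nonneg (by linarith)
      nlinarith
    nlinarith [sq_nonneg (x ^ 2)]
  have hu3 : u ^ 3 ≤ x ^ 3 := pow_le_pow_left₀ hu0 huxle 3
  have key : 2 * (1 - c) * x ^ 2 ≤
      6 * (1 - c) ^ 2 * (x - u) + 3 * (1 - c) * c * u ^ 2 - 2 * c ^ 2 * u ^ 3 := by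
    have h1 : 6 * (1 - c) ^ 2 * (x ^ 2 / 2 - x ^ 3 / 6) ≤ 6 * (1 - c) ^ 2 * (x - u) :=
      mul_le_mul_of_nonneg_left hxu (by positivity)
    have h2 : 3 * (1 - c) * c * (x ^ 2 - x ^ 3) ≤ 3 * (1 - c) * c * u ^ 2 :=
      mul_le_mul_of_nonneg_left hu2 (by positivity)
    have h3 : 2 * c ^ 2 * u ^ 3 ≤ 2 * c ^ 2 * x ^ 3 :=
      mul_le_mul_of_nonneg_left hu3 (by positivity)
    have h4 : x ^ 2 * (x * (1 + c)) ≤ x ^ 2 * (1 - c) :=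
      mul_le_mul_of_nonneg_left hx1 (sq_nonneg x)
    nlinarith [h1, h2, h3, h4]
  -- log bound
  have harg : (1 - c * E) / (1 - c) = 1 + c * u / (1 - c) := by
    rw [hu]; field_simp; ring
  have hy0 : 0 ≤ c * u / (1 - c) := by positivity
  have hlog : Real.log ((1 - c * E) / (1 - c)) ≤
      c * u / (1 - c) - (c * u / (1 - c)) ^ 2 / 2 + (c * u / (1 - c)) ^ 3 / 3 := by
    rw [harg]; exact pab_log_le hy0
  have hPeq : ((1 - c) / τ) *
      (c * u / (1 - c) - (c * u / (1 - c)) ^ 2 / 2 + (c * u / (1 - c)) ^ 3 / 3) =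
      (c * u - c ^ 2 * u ^ 2 / (2 * (1 - c)) + c ^ 3 * u ^ 3 / (3 * (1 - c) ^ 2)) / τ := by
    field_simp
  have hfl : β - (c * u - c ^ 2 * u ^ 2 / (2 * (1 - c)) + c ^ 3 * u ^ 3 / (3 * (1 - c) ^ 2)) / τ ≤
      β - ((1 - c) / τ) * Real.log ((1 - c * E) / (1 - c)) := by
    have := mul_le_mul_of_nonneg_left hlog (le_of_lt (div_pos hd hτ0))
    rw [hPeq] at this
    linarith
  refine le_trans ?_ hfl
  rw [hβ, ← sub_nonneg]
  have expand : c * x / τ -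
      (c * u - c ^ 2 * u ^ 2 / (2 * (1 - c)) + c ^ 3 * u ^ 3 / (3 * (1 - c) ^ 2)) / τ -
      τ * (c * x / τ) ^ 2 / (3 * (1 - c) * c) =
      c * ((6 * (1 - c) ^ 2 * (x - u) + 3 * (1 - c) * c * u ^ 2 - 2 * c ^ 2 * u ^ 3) -
        2 * (1 - c) * x ^ 2) / (6 * (1 - c) ^ 2 * τ) := by
    field_simp
    ring
  rw [expand]
  apply div_nonneg _ (by positivity)
  apply mul_nonneg hc0.le
  linarith

lemma pab_mono (c τ : ℝ) (hc0 : 0 < c) (hc1 : c < 1) (hτ0 : 0 < τ) :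
    StrictMonoOn (fun a : ℝ =>
      a - ((1 - c) / τ) * Real.log ((1 - c * Real.exp (-a * τ / c)) / (1 - c)))
      (Set.Ici 0) := by
  have hd : (0:ℝ) < 1 - c := by linarith
  have hpos : ∀ a : ℝ, 0 ≤ a → 0 < 1 - c * Real.exp (-a * τ / c) := by
    intro a ha
    have h1 : -a * τ / c ≤ 0 := by
      rw [neg_mul, neg_div]
      simp only [neg_nonpos]
      positivity
    have h2 : Real.exp (-a * τ / c) ≤ 1 := by
      calc Real.exp (-a * τ / c) ≤ Real.exp 0 := Real.exp_le_exp.mpr h1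
      _ = 1 := Real.exp_zero
    nlinarith [Real.exp_pos (-a * τ / c)]
  have hder : ∀ a : ℝ, 0 < 1 - c * Real.exp (-a * τ / c) →
      HasDerivAt (fun a : ℝ =>
        a - ((1 - c) / τ) * Real.log ((1 - c * Real.exp (-a * τ / c)) / (1 - c)))
      (1 - ((1 - c) / τ) * (τ * Real.exp (-a * τ / c) / (1 - c * Real.exp (-a * τ / c)))) a := by
    intro a hpa
    set E := Real.exp (-a * τ / c) with hE
    have h1 : HasDerivAt (fun a : ℝ => -a * τ / c) (-1 * τ / c) a :=
      ((hasDerivAt_id a).neg.mul_const τ).div_const c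
    have h2 : HasDerivAt (fun a : ℝ => Real.exp (-a * τ / c)) (E * (-1 * τ / c)) a := h1.exp
    have h3 : HasDerivAt (fun a : ℝ => (1 - c * Real.exp (-a * τ / c)) / (1 - c))
        ((0 - c * (E * (-1 * τ / c))) / (1 - c)) a :=
      ((hasDerivAt_const a (1:ℝ)).sub (h2.const_mul c)).div_const (1 - c)
    have hne : (1 - c * E) / (1 - c) ≠ 0 := by positivity
    have h4 := h3.log hne
    have h5 := (hasDerivAt_id a).sub (h4.const_mul ((1 - c) / τ))
    refine h5.congr_deriv ?_
    have hc' : c ≠ 0 := ne_of_gt hc0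
    have hd' : (1:ℝ) - c ≠ 0 := ne_of_gt hd
    have hcE : (1:ℝ) - c * E ≠ 0 := ne_of_gt hpa
    rw [← hE]
    field_simp
    ring
  apply strictMonoOn_of_deriv_pos (convex_Ici 0)
  · intro a ha
    exact ((hder a (hpos a ha)).differentiableAt).continuousAt.continuousWithinAt
  · intro a ha
    rw [interior_Ici] at ha
    have ha0 : 0 < a := ha
    have hpa := hpos a ha0.le
    rw [(hder a hpa).deriv]
    set E := Real.exp (-a * τ / c) with hE
    have hEpos : 0 < E := Real.exp_pos _
    have hE1 : E < 1 := by
      rw [hE]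
      calc Real.exp (-a * τ / c) < Real.exp 0 := by
            apply Real.exp_lt_exp.mpr
            rw [neg_mul, neg_div]
            simp only [neg_neg, Left.neg_neg_iff]
            positivity
      _ = 1 := Real.exp_zero
    have hkey : ((1 - c) / τ) * (τ * E / (1 - c * E)) = (1 - c) * E / (1 - c * E) := by
      field_simp
    rw [hkey, sub_pos, div_lt_one hpa]
    nlinarith

/-- Other one-sided estimate: if `0 < τ ≤ c(1-c)/(3(1+c)²)`, `α ≥ 0` and
`f(α) = α - ((1-c)/τ)·log((1 - c·exp(-ατ/c))/(1-c)) ≤ 1`, then `α ≤ √(3(1-c)c/τ)`. -/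
theorem positive_alpha_bound (c τ α : ℝ)
    (hc0 : 0 < c) (hc1 : c < 1) (hτ0 : 0 < τ)
    (hτ : τ ≤ c * (1 - c) / (3 * (1 + c) ^ 2))
    (hα : 0 ≤ α)
    (hf : α - ((1 - c) / τ) * Real.log ((1 - c * Real.exp (-α * τ / c)) / (1 - c)) ≤ 1) :
    α ≤ Real.sqrt (3 * (1 - c) * c / τ) := by
  have hd : (0:ℝ) < 1 - c := by linarith
  have h1c : (0:ℝ) < 1 + c := by linarith
  set A : ℝ := c * (1 - c) / ((1 + c) * τ) with hA
  have hA0 : 0 < A := by positivity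
  have hτ' : τ * (3 * (1 + c) ^ 2) ≤ c * (1 - c) :=
    (le_div_iff₀ (by positivity)).mp hτ
  have hargeq : -α * τ / c = -(α * τ / c) := by ring
  rcases le_or_gt α A with hle | hlt
  · -- small α : quadratic bound applies directly
    have hx0 : 0 ≤ α * τ / c := by positivity
    have hx1 : (α * τ / c) * (1 + c) ≤ 1 - c := by
      rw [div_mul_eq_mul_div, div_le_iff₀ hc0]
      have h := mul_le_mul_of_nonneg_right hle (show (0:ℝ) ≤ (1 + c) * τ by positivity)
      have hAe : A * ((1 + c) * τ) = c * (1 - c) := by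
        rw [hA]; field_simp
      nlinarith [h, hAe]
    have hβ : α = c * (α * τ / c) / τ := by field_simp
    have hlow := pab_lower c τ (α * τ / c) α hc0 hc1 hτ0 hx0 hx1 hβ
    rw [← hargeq] at hlow
    have hq : τ * α ^ 2 / (3 * (1 - c) * c) ≤ 1 := le_trans hlow hf
    have hsq : α ^ 2 ≤ 3 * (1 - c) * c / τ := by
      rw [div_le_iff₀ (show (0:ℝ) < 3 * (1 - c) * c by positivity)] at hq
      rw [le_div_iff₀ hτ0]
      nlinarith [hq]
    have := Real.sqrt_le_sqrt hsq
    rwa [Real.sqrt_sq hα] at this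
  · -- large α : contradiction with monotonicity
    exfalso
    have hxA0 : 0 ≤ A * τ / c := by positivity
    have hxA1 : (A * τ / c) * (1 + c) ≤ 1 - c := by
      have : A * τ / c * (1 + c) = 1 - c := by
        rw [hA]; field_simp
      linarith [this.le]
    have hβA : A = c * (A * τ / c) / τ := by field_simp
    have hlowA := pab_lower c τ (A * τ / c) A hc0 hc1 hτ0 hxA0 hxA1 hβA
    have hargeqA : -A * τ / c = -(A * τ / c) := by ring
    rw [← hargeqA] at hlowA
    have hbig : 1 ≤ τ * A ^ 2 / (3 * (1 - c) * c) := by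
      rw [le_div_iff₀ (show (0:ℝ) < 3 * (1 - c) * c by positivity)]
      have hAe : A * ((1 + c) * τ) = c * (1 - c) := by
        rw [hA]; field_simp
      have expand : τ * A ^ 2 - 1 * (3 * (1 - c) * c) =
          (c * (1 - c) - τ * (3 * (1 + c) ^ 2)) * (c * (1 - c)) / ((1 + c) ^ 2 * τ) := by
        rw [hA]; field_simp
      nlinarith [expand, mul_nonneg (sub_nonneg.2 hτ') (mul_nonneg hc0.le hd.le),
        div_nonneg (mul_nonneg (sub_nonneg.2 hτ') (mul_nonneg hc0.le hd.le))
          (show (0:ℝ) ≤ (1 + c) ^ 2 * τ by positivity)]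
    have hmono := pab_mono c τ hc0 hc1 hτ0 (Set.mem_Ici.2 hA0.le) (Set.mem_Ici.2 hα) hlt
    simp only at hmono
    linarith [le_trans hbig hlowA, hmono, hf]
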